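/- Let A be an n×n matrix over a commutative ring that is diagonalizable: A = Σ_{i=1}^n λ_i v_i w_i^T where the v_i are right eigenvectors, w_i are left eigenvectors, and w_i^T v_j = δ_{ij}. Then for each i: adj(λ_i·I_n − A) = (∏_{k≠i} (λ_i − λ_k)) · v_i w_i^T, and consequently det(λ_i·I_{n−1} − M_j) = (∏_{k≠i} (λ_i − λ_k)) · v_{i,j} w_{i,j} for each j. -/

import Mathlib

open Matrix Finset

theorem adjugate_and_minor_of_diagonalizable {R : Type*} [CommRing R] {n : ℕ}
    (A : Matrix (Fin (n+1)) (Fin (n+1)) R)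
    (lam : Fin (n+1) → R) (v w : Fin (n+1) → Fin (n+1) → R)
    (hdual : ∀ i k, dotProduct (w i) (v k) = if i = k then 1 else 0)
    (hdiag : A = ∑ i, lam i • Matrix.vecMulVec (v i) (w i))
    (i : Fin (n+1)) :
    (lam i • (1 : Matrix (Fin (n+1)) (Fin (n+1)) R) - A).adjugate
        = (∏ k ∈ Finset.univ.erase i, (lam i - lam k)) • Matrix.vecMulVec (v i) (w i)
      ∧ ∀ j : Fin (n+1),
        (lam i • (1 : Matrix (Fin n) (Fin n) R) - A.submatrix j.succAbove j.succAbove).det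
          = (∏ k ∈ Finset.univ.erase i, (lam i - lam k)) * (v i j * w i j) := by
  set c : R := ∏ k ∈ Finset.univ.erase i, (lam i - lam k) with hc
  set P : Matrix (Fin (n+1)) (Fin (n+1)) R := Matrix.of fun a b => v b a with hP
  set Q : Matrix (Fin (n+1)) (Fin (n+1)) R := Matrix.of fun a b => w a b with hQ
  have hQP : Q * P = 1 := by
    ext a b
    simp only [Matrix.mul_apply, hP, hQ, Matrix.of_apply, Matrix.one_apply]
    simpa [dotProduct] using hdual a b
  have hPQ : P * Q = 1 := mul_eq_one_comm.mp hQP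
  have hA : A = P * Matrix.diagonal lam * Q := by
    rw [hdiag]
    ext a b
    simp only [Matrix.mul_apply, Matrix.diagonal, Matrix.sum_apply, Matrix.vecMulVec_apply,
      Matrix.smul_apply, smul_eq_mul, Matrix.of_apply, Finset.sum_mul, ite_mul, zero_mul]
    rw [Finset.sum_comm]
    refine Finset.sum_congr rfl fun x _ => ?_
    rw [Finset.sum_eq_single x (by intro b' _ hb'; simp [Ne.symm hb']) (by simp)]
    simp [hP, hQ]
    ring
  have hB : lam i • (1 : Matrix (Fin (n+1)) (Fin (n+1)) R) - A
      = P * (Matrix.diagonal fun k => lam i - lam k) * Q := by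
    have : (Matrix.diagonal fun k => lam i - lam k)
        = lam i • (1 : Matrix (Fin (n+1)) (Fin (n+1)) R) - Matrix.diagonal lam := by
      ext a b
      by_cases h : a = b <;> simp [Matrix.diagonal, Matrix.one_apply, h]
    rw [this, hA]
    rw [Matrix.mul_sub, Matrix.sub_mul, Matrix.mul_smul, mul_one, Matrix.smul_mul, hPQ]
  have hadjP : P.adjugate = P.det • Q := by
    calc P.adjugate = P.adjugate * (P * Q) := by rw [hPQ, mul_one]
    _ = (P.adjugate * P) * Q := by rw [mul_assoc]
    _ = P.det • Q := by rw [Matrix.adjugate_mul, Matrix.smul_mul, one_mul]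
  have hadjQ : Q.adjugate = Q.det • P := by
    calc Q.adjugate = (P * Q) * Q.adjugate := by rw [hPQ, one_mul]
    _ = P * (Q * Q.adjugate) := by rw [mul_assoc]
    _ = Q.det • P := by rw [Matrix.mul_adjugate, Matrix.mul_smul, mul_one]
  have hdet1 : Q.det * P.det = 1 := by
    rw [← Matrix.det_mul, hQP, Matrix.det_one]
  have hadjD : (Matrix.diagonal fun k => lam i - lam k).adjugate
      = Matrix.diagonal (Pi.single i c) := by
    rw [Matrix.adjugate_diagonal]
    ext j k
    rcases eq_or_ne j k with rfl | hjk
    · rcases eq_or_ne j i with rfl | hji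
      · simp [hc]
      · rw [Matrix.diagonal_apply_eq, Matrix.diagonal_apply_eq, Pi.single_eq_of_ne hji]
        exact Finset.prod_eq_zero (Finset.mem_erase.mpr ⟨Ne.symm hji, Finset.mem_univ i⟩)
          (by simp)
    · rw [Matrix.diagonal_apply_ne _ hjk, Matrix.diagonal_apply_ne _ hjk]
  have hmain : (lam i • (1 : Matrix (Fin (n+1)) (Fin (n+1)) R) - A).adjugate
      = c • Matrix.vecMulVec (v i) (w i) := by
    rw [hB, Matrix.adjugate_mul_distrib, Matrix.adjugate_mul_distrib, hadjD, hadjP, hadjQ]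
    ext a b
    simp only [Matrix.mul_apply, Matrix.smul_apply, smul_eq_mul, Matrix.vecMulVec_apply]
    rw [Finset.sum_eq_single i]
    · rw [Finset.sum_eq_single i]
      · simp only [Matrix.diagonal_apply_eq, Pi.single_eq_same, hP, hQ, Matrix.of_apply]
        rw [← hP, ← hQ]
        linear_combination (v i a * c * w i b) * hdet1
      · intro b' _ hb'
        simp [Matrix.diagonal_apply_ne' _ hb']
      · simp
    · intro b' _ hb'
      rw [Finset.sum_eq_zero]
      · simp
      intro k _
      by_cases hk : k = b'
      · subst hk; simp [Pi.single_eq_of_ne hb']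
      · simp [Matrix.diagonal_apply_ne' _ hk]
    · simp
  refine ⟨hmain, fun j => ?_⟩
  have hsub : (lam i • (1 : Matrix (Fin n) (Fin n) R) - A.submatrix j.succAbove j.succAbove)
      = (lam i • (1 : Matrix (Fin (n+1)) (Fin (n+1)) R) - A).submatrix j.succAbove j.succAbove := by
    ext a b
    by_cases h : a = b
    · subst h; simp
    · have : j.succAbove a ≠ j.succAbove b := fun hh => h (Fin.succAbove_right_injective hh)
      simp [Matrix.one_apply, h, this]
  rw [hsub]
  have := Matrix.adjugate_fin_succ_eq_det_submatrix
    (lam i • (1 : Matrix (Fin (n+1)) (Fin (n+1)) R) - A) j j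
  rw [hmain] at this
  have h2 : ((-1 : R)) ^ (j + j : ℕ) = 1 := by
    rw [← two_mul, pow_mul]; norm_num
  rw [h2, one_mul] at this
  rw [← this]
  simp [Matrix.vecMulVec_apply, mul_comm, mul_left_comm]
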